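/- arXiv:1801.03413 — 6 statements merged into one kernel-verified Lean document; each statement's English description precedes it below -/
import Mathlib

section
/- For every finite poset P, the cover-incomparability graph G_P is a connected graph. -/
/-- The cover-incomparability graph of a poset: distinct `u, v` are adjacent
iff `u ⋖ v`, or `v ⋖ u`, or `u` and `v` are incomparable. -/
def ciGraph (α : Type*) [PartialOrder α] : SimpleGraph α where
  Adj u v := u ⋖ v ∨ v ⋖ u ∨ (¬ u ≤ v ∧ ¬ v ≤ u)
  symm := by
    constructor
    intro u v h
    rcases h with h | h | h
    · exact Or.inr (Or.inl h)
    · exact Or.inl h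
    · exact Or.inr (Or.inr ⟨h.2, h.1⟩)
  loopless := by
    constructor
    intro u h
    rcases h with h | h | h
    · exact absurd h.lt (lt_irrefl u)
    · exact absurd h.lt (lt_irrefl u)
    · exact h.1 le_rfl

/-- For every finite poset `P`, the cover-incomparability graph `G_P` is connected. -/
theorem stmt0 (α : Type*) [Fintype α] [PartialOrder α] [Nonempty α] :
    (ciGraph α).Connected := by
  classical
  have : LocallyFiniteOrder α := Fintype.toLocallyFiniteOrder
  rw [SimpleGraph.connected_iff]
  refine ⟨fun u v => ?_, ‹_›⟩
  have key : ∀ a b : α, a < b → (ciGraph α).Reachable a b := by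
    intro a b hab
    have h := transGen_covBy_of_lt hab
    clear hab
    induction h with
    | single h => exact SimpleGraph.Adj.reachable (Or.inl h)
    | tail _ h ih => exact ih.trans (SimpleGraph.Adj.reachable (Or.inl h))
  rcases eq_or_ne u v with rfl | hne
  · exact SimpleGraph.Reachable.refl u
  by_cases h1 : u ≤ v
  · exact key u v (lt_of_le_of_ne h1 hne)
  by_cases h2 : v ≤ u
  · exact (key v u (lt_of_le_of_ne h2 hne.symm)).symm
  · exact SimpleGraph.Adj.reachable (Or.inr (Or.inr ⟨h1, h2⟩))
end

section
/- Let P be a finite poset and G_P its cover-incomparability graph. Then G_P has at most 2 vertices of degree 1. -/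
lemma ci_key (α : Type*) [Fintype α] [PartialOrder α] (h3 : 3 ≤ Fintype.card α)
    (v w : α) (hN : (ciGraph α).neighborSet v = {w}) :
    (∀ u, v ≤ u) ∨ (∀ u, u ≤ v) := by
  have hadj : ∀ u, (ciGraph α).Adj v u → u = w := by
    intro u hu
    have : u ∈ (ciGraph α).neighborSet v := hu
    rwa [hN, Set.mem_singleton_iff] at this
  -- any u ≠ v, u ≠ w is comparable to v (non-cover)
  have hcomp : ∀ u, u ≠ v → u ≠ w → v < u ∨ u < v := by
    intro u huv huw
    by_contra hc
    push_neg at hc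
    have : (ciGraph α).Adj v u := by
      refine Or.inr (Or.inr ⟨?_, ?_⟩)
      · intro h; exact hc.1 (lt_of_le_of_ne h (Ne.symm huv))
      · intro h; exact hc.2 (lt_of_le_of_ne h huv)
    exact huw (hadj u this)
  have hup : ∀ u, v < u → v ⋖ w ∧ w ≤ u := by
    intro u hu
    obtain ⟨z, hz1, hz2⟩ := exists_covBy_le_of_lt hu
    have : z = w := hadj z (Or.inl hz1)
    subst this; exact ⟨hz1, hz2⟩
  have hdown : ∀ u, u < v → w ⋖ v ∧ u ≤ w := by
    intro u hu
    obtain ⟨z, hz1, hz2⟩ := exists_le_covBy_of_lt hu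
    have : z = w := hadj z (Or.inr (Or.inl hz2))
    subst this; exact ⟨hz2, hz1⟩
  by_cases hex : ∃ u, u < v
  · obtain ⟨u0, hu0⟩ := hex
    have hwv : w ⋖ v := (hdown u0 hu0).1
    right
    intro u
    rcases eq_or_ne u v with rfl | huv
    · exact le_rfl
    rcases eq_or_ne u w with rfl | huw
    · exact hwv.le
    rcases hcomp u huv huw with h | h
    · exact absurd ((hup u h).1.lt.trans hwv.lt) (lt_irrefl v)
    · exact h.le
  · push_neg at hex
    left
    intro u
    rcases eq_or_ne u v with rfl | huv
    · exact le_rfl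
    rcases eq_or_ne u w with rfl | huw
    · -- find a third element
      obtain ⟨x, hx⟩ : ∃ x, x ≠ v ∧ x ≠ u := by
        have : 3 ≤ Fintype.card α := h3
        by_contra hc
        push_neg at hc
        have : Fintype.card α ≤ 2 := by
          have hsub : (Set.univ : Set α) ⊆ {v, u} := by
            intro x _
            rcases eq_or_ne x v with rfl | h1
            · exact Or.inl rfl
            · exact Or.inr (hc x h1)
          calc Fintype.card α = (Set.univ : Set α).ncard := by
                simp [Set.ncard_univ]
            _ ≤ ({v, u} : Set α).ncard := Set.ncard_le_ncard hsub (Set.toFinite _)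
            _ ≤ 2 := Set.ncard_insert_le _ _ |>.trans (by simp)
        omega
      rcases hcomp x hx.1 hx.2 with h | h
      · exact ((hup x h).1).le
      · exact absurd (hex x h) (by simp [hex x h])
    rcases hcomp u huv huw with h | h
    · exact h.le
    · exact absurd h (hex u)

/-- The cover-incomparability graph of a finite poset has at most two vertices of
degree 1 (i.e. with exactly one neighbor). -/
theorem stmt3 (α : Type*) [Fintype α] [PartialOrder α] :
    {v : α | ((ciGraph α).neighborSet v).ncard = 1}.ncard ≤ 2 := by
  by_cases h3 : 3 ≤ Fintype.card α
  · set A : Set α := {v | ∀ u, v ≤ u}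
    set B : Set α := {v | ∀ u, u ≤ v}
    have hsub : {v : α | ((ciGraph α).neighborSet v).ncard = 1} ⊆ A ∪ B := by
      intro v hv
      obtain ⟨w, hw⟩ := Set.ncard_eq_one.mp hv
      rcases ci_key α h3 v w hw with h | h
      · exact Or.inl h
      · exact Or.inr h
    have hA : A.ncard ≤ 1 := (Set.ncard_le_one (Set.toFinite _)).mpr
      (fun a ha b hb => le_antisymm (ha b) (hb a))
    have hB : B.ncard ≤ 1 := (Set.ncard_le_one (Set.toFinite _)).mpr
      (fun a ha b hb => le_antisymm (hb a) (ha b))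
    calc {v : α | ((ciGraph α).neighborSet v).ncard = 1}.ncard
        ≤ (A ∪ B).ncard := Set.ncard_le_ncard hsub (Set.toFinite _)
      _ ≤ A.ncard + B.ncard := Set.ncard_union_le _ _
      _ ≤ 2 := by omega
  · calc {v : α | ((ciGraph α).neighborSet v).ncard = 1}.ncard
        ≤ (Set.univ : Set α).ncard := Set.ncard_le_ncard (Set.subset_univ _) (Set.toFinite _)
      _ = Fintype.card α := by simp [Set.ncard_univ]
      _ ≤ 2 := by omega
end

section
/- Let P be a finite poset, Q a ≺-preserving subposet of P, and H a finite simple graph. If the cover-incomparability graph G_Q contains an induced subgraph isomorphic to H, then the cover-incomparability graph G_P contains an induced subgraph isomorphic to H. -/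
/-- A subset `S` of a poset is a `≺`-preserving subposet if for all `u, v ∈ S`,
`u` is covered by `v` in the induced order on `S` iff `u` is covered by `v` in the
ambient poset. -/
def IsCovPreserving {α : Type*} [PartialOrder α] (S : Set α) : Prop :=
  ∀ u v : S, u ⋖ v ↔ (u : α) ⋖ (v : α)

/-- `l` is a saturated chain from `u` to `v`: a list of successive covering
relations starting at `u` and ending at `v`. -/
def IsSatChain {α : Type*} [PartialOrder α] (u v : α) (l : List α) : Prop :=
  l.Chain' (· ⋖ ·) ∧ l.head? = some u ∧ l.getLast? = some v

/-- A subset `R` of a poset is an isometric subposet if for all `u ≤ v` in `R`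
there is a saturated chain from `u` to `v` of minimum length among all saturated
chains from `u` to `v` in the ambient poset, all of whose elements lie in `R`. -/
def IsIsometricSubposet {α : Type*} [PartialOrder α] (R : Set α) : Prop :=
  ∀ u ∈ R, ∀ v ∈ R, u ≤ v →
    ∃ l : List α, IsSatChain u v l ∧
      (∀ l' : List α, IsSatChain u v l' → l.length ≤ l'.length) ∧
      ∀ x ∈ l, x ∈ R

/-- If `Q` is a `≺`-preserving subposet of a finite poset `P` and the
cover-incomparability graph `G_Q` contains an induced subgraph isomorphic to a finite
graph `H`, then so does `G_P`. -/
theorem stmt9 (α : Type*) [Fintype α] [PartialOrder α] (Q : Set α)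
    (hQ : IsCovPreserving Q) {β : Type*} [Fintype β] (H : SimpleGraph β)
    (h : Nonempty (H ↪g ciGraph Q)) : Nonempty (H ↪g ciGraph α) := by
  obtain ⟨e⟩ := h
  refine ⟨e.trans ⟨⟨Subtype.val, Subtype.val_injective⟩, ?_⟩⟩
  intro u v
  simp only [Function.Embedding.coeFn_mk, ciGraph]
  constructor
  · rintro (hc | hc | hc)
    · exact Or.inl ((hQ u v).mpr hc)
    · exact Or.inr (Or.inl ((hQ v u).mpr hc))
    · exact Or.inr (Or.inr ⟨fun h' => hc.1 h', fun h' => hc.2 h'⟩)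
  · rintro (hc | hc | hc)
    · exact Or.inl ((hQ u v).mp hc)
    · exact Or.inr (Or.inl ((hQ v u).mp hc))
    · exact Or.inr (Or.inr ⟨fun h' => hc.1 h', fun h' => hc.2 h'⟩)
end

section
/- Let F be a family of finite simple graphs, and let 𝒢 be the class of finite simple graphs G such that no induced subgraph of G is isomorphic to a member of F. Let 𝒫 be the class of finite posets P whose cover-incomparability graph G_P belongs to 𝒢. Then 𝒫 has a characterization by forbidden ≺-preserving subposets: there exists a family 𝒬 of finite posets such that for every finite poset P, P belongs to 𝒫 iff no ≺-preserving subposet of P is isomorphic (as a poset) to a member of 𝒬. -/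
/-- A carrier type with `n` elements carrying no pre-existing order instances. -/
structure Carrier (n : ℕ) where
  val : Fin n

/-- A representation of a finite poset: a size together with a partial order on a
carrier of that size. -/
def FinPosetRep : Type := Σ n : ℕ, PartialOrder (Carrier n)

/-- The poset `α` contains a `≺`-preserving subposet order-isomorphic to the finite
poset represented by `Q`. -/
def HasCovPresCopy (α : Type) [PartialOrder α] (Q : FinPosetRep) : Prop :=
  letI := Q.2
  ∃ S : Set α, IsCovPreserving S ∧ Nonempty (Carrier Q.1 ≃o ↥S)


def ciGraphIso {β γ : Type*} [PartialOrder β] [PartialOrder γ] (e : β ≃o γ) :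
    ciGraph β ≃g ciGraph γ where
  toEquiv := e.toEquiv
  map_rel_iff' := by
    intro u v
    simp [ciGraph, apply_covBy_apply_iff e, e.le_iff_le]

def ciGraphEmb {α : Type*} [PartialOrder α] (S : Set α) (hS : IsCovPreserving S) :
    ciGraph ↥S ↪g ciGraph α where
  toFun := Subtype.val
  inj' := Subtype.val_injective
  map_rel_iff' := by
    intro u v
    simp only [ciGraph, Function.Embedding.coeFn_mk]
    rw [← hS u v, ← hS v u, ← Subtype.coe_le_coe, ← Subtype.coe_le_coe]

theorem covPres_univ {α : Type*} [PartialOrder α] : IsCovPreserving (Set.univ : Set α) := by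
  intro u v
  exact (apply_covBy_apply_iff (OrderIso.Set.univ (α := α))).symm

/-- If `𝒢` is the class of finite simple graphs avoiding every member of a family `F`
of finite graphs as an induced subgraph, then the class `𝒫` of finite posets whose
cover-incomparability graph lies in `𝒢` is characterized by forbidden `≺`-preserving
subposets: there is a family `𝒬` of finite posets such that a finite poset belongs to
`𝒫` iff none of its `≺`-preserving subposets is isomorphic to a member of `𝒬`. -/
theorem stmt10 (F : Set (Σ n : ℕ, SimpleGraph (Fin n))) :
    ∃ 𝒬 : Set FinPosetRep,
      ∀ (α : Type) [Fintype α] [PartialOrder α],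
        ((∀ H ∈ F, IsEmpty (H.2 ↪g ciGraph α)) ↔
          ∀ Q ∈ 𝒬, ¬ HasCovPresCopy α Q) := by
  classical
  refine ⟨{Q : FinPosetRep | letI := Q.2;
      ∃ H ∈ F, Nonempty (H.2 ↪g ciGraph (Carrier Q.1))}, ?_⟩
  intro α _ _
  constructor
  · rintro hα Q hQ ⟨S, hS, ⟨e⟩⟩
    letI := Q.2
    obtain ⟨H, hH, ⟨f⟩⟩ := hQ
    exact (hα H hH).false
      (((ciGraphEmb S hS).comp (ciGraphIso e).toEmbedding).comp f)
  · intro h H hH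
    by_contra hne
    rw [not_isEmpty_iff] at hne
    obtain ⟨f⟩ := hne
    set n := Fintype.card α with hn
    let g : Carrier n ≃ α :=
      (⟨Carrier.val, Carrier.mk, fun _ => rfl, fun _ => rfl⟩ : Carrier n ≃ Fin n).trans
        (Fintype.equivFin α).symm
    letI P : PartialOrder (Carrier n) := PartialOrder.lift g g.injective
    let e : Carrier n ≃o α := ⟨g, Iff.rfl⟩
    refine h ⟨n, P⟩ ⟨H, hH, ⟨((ciGraphIso e).symm.toEmbedding).comp f⟩⟩
      ⟨Set.univ, covPres_univ, ⟨e.trans (OrderIso.Set.univ (α := α)).symm⟩⟩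
end

section
/- Let Q be a finite poset in which every chain has at most three elements (i.e., the longest chain of Q has length two). Then for every finite poset P, P contains a ≺-preserving subposet isomorphic to Q if and only if P contains an isometric subposet isomorphic to Q. -/
section Aux

variable {α : Type*} [PartialOrder α] {u v : α}

/-- Structure of a saturated chain: it is `[u]` with `u = v`, or `[u, v]` with `u ⋖ v`,
or it starts `u :: w :: _` with `u ⋖ w` and `w < v`. -/
lemma satChain_cases {l : List α} (h : IsSatChain u v l) :
    (l = [u] ∧ u = v) ∨ (l = [u, v] ∧ u ⋖ v) ∨
      ∃ w t, l = u :: w :: t ∧ u ⋖ w ∧ w < v := by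
  obtain ⟨hc, hh, hl⟩ := h
  match l with
  | [] => simp at hh
  | [a] =>
    simp only [List.head?_cons, Option.some.injEq] at hh
    simp only [List.getLast?_singleton, Option.some.injEq] at hl
    exact Or.inl ⟨by rw [hh], hh.symm.trans hl⟩
  | [a, b] =>
    simp only [List.head?_cons, Option.some.injEq] at hh
    rw [List.getLast?_cons_cons, List.getLast?_singleton, Option.some.injEq] at hl
    subst hh; subst hl
    exact Or.inr (Or.inl ⟨rfl, (List.isChain_cons_cons.mp hc).1⟩)
  | a :: b :: c :: t =>
    simp only [List.head?_cons, Option.some.injEq] at hh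
    subst hh
    refine Or.inr (Or.inr ⟨b, c :: t, rfl, (List.isChain_cons_cons.mp hc).1, ?_⟩)
    -- `v` is the last element of `c :: t`, and the list is pairwise `<` so `b < v`.
    have hpw : (a :: b :: c :: t).Pairwise (· < ·) :=
      List.isChain_iff_pairwise.mp (hc.imp fun _ _ hab => hab.lt)
    have hvmem : v ∈ c :: t := by
      rw [List.getLast?_cons_cons, List.getLast?_cons_cons] at hl
      obtain ⟨ys, hys⟩ := List.getLast?_eq_some_iff.mp hl
      rw [hys]; exact List.mem_append.mpr (Or.inr (by simp))
    have := (List.pairwise_cons.mp (List.pairwise_cons.mp hpw).2).1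
    exact this v hvmem

lemma satChain_single : IsSatChain u u [u] :=
  ⟨List.isChain_singleton u, rfl, rfl⟩

lemma satChain_pair (h : u ⋖ v) : IsSatChain u v [u, v] :=
  ⟨List.isChain_cons_cons.mpr ⟨h, List.isChain_singleton v⟩, rfl, rfl⟩

lemma satChain_triple {w : α} (h1 : u ⋖ w) (h2 : w ⋖ v) : IsSatChain u v [u, w, v] :=
  ⟨List.isChain_cons_cons.mpr ⟨h1, List.isChain_cons_cons.mpr ⟨h2, List.isChain_singleton v⟩⟩, rfl, rfl⟩

lemma satChain_one_le {l : List α} (h : IsSatChain u v l) : 1 ≤ l.length := by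
  rcases satChain_cases h with ⟨rfl, _⟩ | ⟨rfl, _⟩ | ⟨w, t, rfl, _, _⟩ <;> simp

lemma satChain_two_le {l : List α} (h : IsSatChain u v l) (hne : u ≠ v) : 2 ≤ l.length := by
  rcases satChain_cases h with ⟨rfl, h'⟩ | ⟨rfl, _⟩ | ⟨w, t, rfl, _, _⟩
  · exact absurd h' hne
  · simp
  · simp only [List.length_cons]; omega

lemma satChain_three_le {l : List α} (h : IsSatChain u v l) (hne : u ≠ v) (hnc : ¬ u ⋖ v) :
    3 ≤ l.length := by
  rcases satChain_cases h with ⟨rfl, h'⟩ | ⟨rfl, h'⟩ | ⟨w, t, rfl, h1, h2⟩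
  · exact absurd h' hne
  · exact absurd h' hnc
  · -- the list is u :: w :: t with w < v, so t ≠ [] since getLast = v ≠ w
    match t with
    | [] =>
      obtain ⟨_, _, hl⟩ := h
      rw [List.getLast?_cons_cons, List.getLast?_singleton, Option.some.injEq] at hl
      exact absurd hl (ne_of_lt h2)
    | a :: t' => simp only [List.length_cons]; omega

/-- An isometric subposet is `≺`-preserving. -/
lemma IsCovPreserving_of_isometric {R : Set α} (hR : IsIsometricSubposet R) :
    IsCovPreserving R := by
  intro u v
  constructor
  · intro huv
    have hlt : (u : α) < v := huv.lt
    obtain ⟨l, hl, hmin, hmem⟩ := hR u u.2 v v.2 hlt.le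
    rcases satChain_cases hl with ⟨_, h'⟩ | ⟨_, h'⟩ | ⟨w, t, hlw, h1, h2⟩
    · exact absurd h' (ne_of_lt hlt)
    · exact h'
    · exfalso
      have hwR : w ∈ R := hmem w (by rw [hlw]; simp)
      have hA : u < (⟨w, hwR⟩ : ↥R) := Subtype.coe_lt_coe.mp h1.lt
      have hB : (⟨w, hwR⟩ : ↥R) < v := Subtype.coe_lt_coe.mp h2
      exact huv.2 hA hB
  · intro huv
    refine ⟨Subtype.coe_lt_coe.mp huv.lt, ?_⟩
    intro z hz hz'
    exact huv.2 (Subtype.coe_lt_coe.mpr hz) (Subtype.coe_lt_coe.mpr hz')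

end Aux

/-- For a finite poset `Q` whose chains all have at most three elements, a finite poset
`P` contains a `≺`-preserving subposet isomorphic to `Q` iff it contains an isometric
subposet isomorphic to `Q`. -/
theorem stmt11 (β : Type*) [Fintype β] [PartialOrder β]
    (hchain : ∀ a b c d : β, a < b → b < c → c < d → False)
    (α : Type*) [Fintype α] [PartialOrder α] :
    (∃ S : Set α, IsCovPreserving S ∧ Nonempty (β ≃o ↥S)) ↔
      (∃ R : Set α, IsIsometricSubposet R ∧ Nonempty (β ≃o ↥R)) := by
  constructor
  · rintro ⟨S, hS, ⟨e⟩⟩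
    refine ⟨S, ?_, ⟨e⟩⟩
    -- transport the chain condition to S
    have hchainS : ∀ a b c d : ↥S, a < b → b < c → c < d → False := by
      intro a b c d hab hbc hcd
      exact hchain (e.symm a) (e.symm b) (e.symm c) (e.symm d)
        (e.symm.lt_iff_lt.mpr hab) (e.symm.lt_iff_lt.mpr hbc) (e.symm.lt_iff_lt.mpr hcd)
    have : Finite ↥S := inferInstance
    have hsa : IsStronglyAtomic ↥S := inferInstance
    intro u hu v hv huv
    rcases eq_or_lt_of_le huv with rfl | hlt
    · exact ⟨[u], satChain_single, fun l' hl' => satChain_one_le hl', by simp [hu]⟩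
    by_cases hcov : (⟨u, hu⟩ : ↥S) ⋖ ⟨v, hv⟩
    · refine ⟨[u, v], satChain_pair ((hS _ _).mp hcov), ?_, by simp [hu, hv]⟩
      intro l' hl'
      exact satChain_two_le hl' (ne_of_lt hlt)
    · -- find w with u ⋖ w ≤ v in S
      have hltS : (⟨u, hu⟩ : ↥S) < ⟨v, hv⟩ := Subtype.mk_lt_mk.mpr hlt
      obtain ⟨w, hw1, hw2⟩ := exists_covBy_le_of_lt hltS
      have hwv : w < ⟨v, hv⟩ := lt_of_le_of_ne hw2 (by rintro rfl; exact hcov hw1)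
      -- w ⋖ v in S, else we get a 4-chain
      have hwcov : w ⋖ (⟨v, hv⟩ : ↥S) := by
        obtain ⟨x, hx1, hx2⟩ := exists_covBy_le_of_lt hwv
        rcases eq_or_lt_of_le hx2 with rfl | hxv
        · exact hx1
        · exact absurd hxv (fun h => hchainS _ _ _ _ hw1.lt hx1.lt h)
      have huwα : u ⋖ (w : α) := (hS _ _).mp hw1
      have hwvα : (w : α) ⋖ v := (hS _ _).mp hwcov
      refine ⟨[u, (w : α), v], satChain_triple huwα hwvα, ?_, by simp [hu, hv, w.2]⟩
      intro l' hl'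
      have : ¬ u ⋖ v := fun h => hcov ((hS _ _).mpr h)
      exact satChain_three_le hl' (ne_of_lt hlt) this
  · rintro ⟨R, hR, ⟨e⟩⟩
    exact ⟨R, IsCovPreserving_of_isometric hR, ⟨e⟩⟩
end

section
/- Let P be the poset on the five-element set {v1, v2, v3, v4, x} whose order is generated by the covering relations v1 ⋖ v2 ⋖ v3 ⋖ v4 and v1 ⋖ x ⋖ v4. Then in the cover-incomparability graph G_P, the subgraph induced by {v1, v2, v3, v4} is isomorphic to the path P4 on four vertices (edges exactly v1–v2, v2–v3, v3–v4); consequently G_P is not a cograph. -/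
/-- The poset on `{v1, v2, v3, v4, x}` generated by the covering relations
`v1 ⋖ v2 ⋖ v3 ⋖ v4` and `v1 ⋖ x ⋖ v4`. -/
inductive V5 : Type
  | v1 | v2 | v3 | v4 | x
  deriving DecidableEq

instance : Fintype V5 where
  elems := {V5.v1, V5.v2, V5.v3, V5.v4, V5.x}
  complete := by
    intro a
    cases a <;> simp

open V5

def le5 : V5 → V5 → Bool
  | v1, _ => true
  | _, v4 => true
  | v2, v2 | v2, v3 => true
  | v3, v3 => true
  | x, x => true
  | _, _ => false

instance : PartialOrder V5 where
  le a b := le5 a b = true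
  le_refl a := by
    have h : ∀ z : V5, le5 z z = true := by decide
    exact h a
  le_trans a b c hab hbc := by
    have h : ∀ p q r : V5, le5 p q = true → le5 q r = true → le5 p r = true := by decide
    exact h a b c hab hbc
  le_antisymm a b hab hba := by
    have h : ∀ p q : V5, le5 p q = true → le5 q p = true → p = q := by decide
    exact h a b hab hba

instance : DecidableRel ((· ≤ ·) : V5 → V5 → Prop) := fun a b =>
  instDecidableEqBool (le5 a b) true

instance : DecidableRel ((· < ·) : V5 → V5 → Prop) := fun a b =>
  decidable_of_iff (a ≤ b ∧ ¬ b ≤ a) lt_iff_le_not_ge.symm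

instance : DecidableRel ((· ⋖ ·) : V5 → V5 → Prop) := fun a b =>
  decidable_of_iff (a < b ∧ ∀ c, a < c → ¬ c < b) (by
    constructor
    · rintro ⟨h1, h2⟩; exact ⟨h1, fun c hc => h2 c hc⟩
    · rintro ⟨h1, h2⟩; exact ⟨h1, fun c hc => h2 hc⟩)

instance : DecidableRel (ciGraph V5).Adj := fun a b =>
  inferInstanceAs (Decidable (_ ∨ _ ∨ _))

/-- In the poset generated by the covers `v1 ⋖ v2 ⋖ v3 ⋖ v4` and `v1 ⋖ x ⋖ v4`, the
subgraph of the cover-incomparability graph induced by `{v1, v2, v3, v4}` is the path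
`P4` (edges exactly `v1–v2`, `v2–v3`, `v3–v4`); consequently the
cover-incomparability graph is not a cograph (it has an induced `P4`). -/
theorem stmt16 :
    ((ciGraph V5).Adj v1 v2 ∧ (ciGraph V5).Adj v2 v3 ∧ (ciGraph V5).Adj v3 v4 ∧
      ¬ (ciGraph V5).Adj v1 v3 ∧ ¬ (ciGraph V5).Adj v1 v4 ∧
      ¬ (ciGraph V5).Adj v2 v4) ∧
    Nonempty (SimpleGraph.pathGraph 4 ↪g ciGraph V5) := by
  have h : ∀ a b : Fin 4, (ciGraph V5).Adj (![v1, v2, v3, v4] a) (![v1, v2, v3, v4] b) ↔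
      (SimpleGraph.pathGraph 4).Adj a b := by
    simp only [SimpleGraph.pathGraph_adj]
    decide
  exact ⟨by decide, ⟨⟨⟨![v1, v2, v3, v4], by decide⟩, fun {a b} => h a b⟩⟩⟩
end
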